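/- For every derivation D of P_n and every integer i ≥ 1, J(D^{[i]}) = Σ_{j=0}^{i-2} J(D)^j · (D^{[i-1-j]}(J(D))) + J(D)^i, where D^{[0]} = D is interpreted consistently with D^{[1]} = D (so for i = 1 the sum is empty and the formula reads J(D^{[1]}) = J(D)), and D^{[m]}(J(D)) denotes entrywise application of the derivation D^{[m]} to the matrix J(D). -/

import Mathlib

open MvPolynomial

/-- `Pn k n` is the polynomial algebra `k[x₁,…,xₙ]`. -/
abbrev Pn (k : Type*) [CommRing k] (n : ℕ) := MvPolynomial (Fin n) k

/-- `Der k n` is the space of `k`-linear derivations of `Pn k n`. -/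
abbrev Der (k : Type*) [CommRing k] (n : ℕ) := Derivation k (Pn k n) (Pn k n)

variable {k : Type*} [Field k] [CharZero k] {n : ℕ}

/-- The left-symmetric product of derivations: `(D · E)(xᵢ) = D (E xᵢ)`. -/
noncomputable def lsMul (D E : Der k n) : Der k n :=
  MvPolynomial.mkDerivation k (fun i => D (E (MvPolynomial.X i)))

/-- The Jacobian matrix of a derivation: `(J D)ᵢⱼ = ∂(D xᵢ)/∂xⱼ`. -/
noncomputable def jac (D : Der k n) : Matrix (Fin n) (Fin n) (Pn k n) :=
  Matrix.of fun i j => MvPolynomial.pderiv j (D (MvPolynomial.X i))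

/-- The divergence of a derivation. -/
noncomputable def divg (D : Der k n) : Pn k n :=
  ∑ i, MvPolynomial.pderiv i (D (MvPolynomial.X i))

/-- Right powers: `rpow D 1 = D`, `rpow D (r+1) = (rpow D r) · D` (for `r ≥ 1`). -/
noncomputable def rpow (D : Der k n) : ℕ → Der k n
  | 0 => D
  | 1 => D
  | (r+2) => lsMul (rpow D (r+1)) D

/-- Left powers: `lpow D 1 = D`, `lpow D (r+1) = D · (lpow D r)` (for `r ≥ 1`). -/
noncomputable def lpow (D : Der k n) : ℕ → Der k n
  | 0 => D
  | 1 => D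
  | (r+2) => lsMul D (lpow D (r+1))

/-- Right multiplication operator `R_D : E ↦ E · D`, as a `k`-linear endomorphism. -/
noncomputable def rmulOp (D : Der k n) : Der k n →ₗ[k] Der k n where
  toFun E := lsMul E D
  map_add' E₁ E₂ := by
    show (MvPolynomial.mkDerivationEquiv k) _ =
      (MvPolynomial.mkDerivationEquiv k) _ + (MvPolynomial.mkDerivationEquiv k) _
    rw [← map_add]
    exact congrArg _ (funext fun i => by simp)
  map_smul' c E := by
    show (MvPolynomial.mkDerivationEquiv k) _ = c • (MvPolynomial.mkDerivationEquiv k) _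
    rw [← map_smul]
    exact congrArg _ (funext fun i => by simp)

/-- Left multiplication operator `L_D : E ↦ D · E`, as a `k`-linear endomorphism. -/
noncomputable def lmulOp (D : Der k n) : Der k n →ₗ[k] Der k n where
  toFun E := lsMul D E
  map_add' E₁ E₂ := by
    show (MvPolynomial.mkDerivationEquiv k) _ =
      (MvPolynomial.mkDerivationEquiv k) _ + (MvPolynomial.mkDerivationEquiv k) _
    rw [← map_add]
    exact congrArg _ (funext fun i => by simp)
  map_smul' c E := by
    show (MvPolynomial.mkDerivationEquiv k) _ = c • (MvPolynomial.mkDerivationEquiv k) _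
    rw [← map_smul]
    exact congrArg _ (funext fun i => by simp)

/-- `Zc F i a` is the coefficient of `t^i` in the image of `a` under `xⱼ ↦ xⱼ + t·fⱼ`. -/
noncomputable def Zc (F : Fin n → Pn k n) (i : ℕ) (a : Pn k n) : Pn k n :=
  (MvPolynomial.aeval
    (fun j => Polynomial.C (MvPolynomial.X j) + Polynomial.C (F j) * Polynomial.X :
      Fin n → Polynomial (Pn k n)) a).coeff i

/-- `PsiOp F m a = Σ (−1)^{k−1} r_k Z_{r₁}(Z_{r₂}(⋯ Z_{r_k}(a)⋯))`, summed over
compositions `(r₁,…,r_k)` of `m`. -/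
noncomputable def PsiOp (F : Fin n → Pn k n) (m : ℕ) (a : Pn k n) : Pn k n :=
  ∑ c : Composition m,
    (-1 : Pn k n) ^ (c.length - 1) * ((c.blocks.getLastD 0 : ℕ) : Pn k n) *
      (c.blocks.foldr (fun r b => Zc F r b) a)


lemma sumD_apply {ι : Type*} (s : Finset ι) (f : ι → Der k n) (p : Pn k n) :
    (∑ c ∈ s, f c) p = ∑ c ∈ s, f c p := by
  classical
  induction s using Finset.induction with
  | empty => simp
  | insert _ _ h ih => simp [Finset.sum_insert h, ih]

/-- Auxiliary: `mkDerivation k w` equals the linear combination `∑ c, w c • pderiv c`. -/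
lemma mkDerivation_eq_sum (w : Fin n → Pn k n) :
    MvPolynomial.mkDerivation k w = ∑ c, w c • (MvPolynomial.pderiv c : Der k n) := by
  apply MvPolynomial.derivation_ext
  intro i
  classical
  rw [MvPolynomial.mkDerivation_X, sumD_apply]
  simp [MvPolynomial.pderiv_X, Pi.single_apply, mul_ite]

lemma pderiv_derivation (E : Der k n) (b : Fin n) (p : Pn k n) :
    MvPolynomial.pderiv b (E p) =
      E (MvPolynomial.pderiv b p) +
        ∑ c, MvPolynomial.pderiv c p * MvPolynomial.pderiv b (E (MvPolynomial.X c)) := by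
  classical
  have hbr : ⁅(MvPolynomial.pderiv b : Der k n), E⁆ =
      MvPolynomial.mkDerivation k (fun c => MvPolynomial.pderiv b (E (MvPolynomial.X c))) := by
    apply MvPolynomial.derivation_ext
    intro i
    rw [Derivation.commutator_apply, MvPolynomial.mkDerivation_X]
    rcases eq_or_ne i b with h | h
    · subst h; simp [MvPolynomial.pderiv_X_self]
    · simp [MvPolynomial.pderiv_X_of_ne h]
  have h1 := congrArg (fun (T : Der k n) => T p) hbr
  simp only [Derivation.commutator_apply, mkDerivation_eq_sum, sumD_apply,
    Derivation.smul_apply, smul_eq_mul] at h1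
  rw [sub_eq_iff_eq_add] at h1
  rw [h1, add_comm]
  congr 1
  exact Finset.sum_congr rfl (fun c _ => mul_comm _ _)

lemma lsMul_apply_X (E D : Der k n) (a : Fin n) :
    lsMul E D (MvPolynomial.X a) = E (D (MvPolynomial.X a)) :=
  MvPolynomial.mkDerivation_X _ _ _

lemma jac_lsMul (E D : Der k n) :
    jac (lsMul E D) = (jac D).map ⇑E + jac D * jac E := by
  ext a b
  rw [jac, Matrix.of_apply, lsMul_apply_X, pderiv_derivation]
  rw [Matrix.add_apply, Matrix.map_apply, Matrix.mul_apply]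
  rfl

lemma jac_rpow_aux (D : Der k n) (m : ℕ) :
    jac (rpow D (m + 1)) =
      (∑ j ∈ Finset.range m, (jac D) ^ j * (jac D).map ⇑(rpow D (m - j))) +
        (jac D) ^ (m + 1) := by
  induction m with
  | zero => simp [rpow]
  | succ m ih =>
    show jac (lsMul (rpow D (m + 1)) D) = _
    rw [jac_lsMul, ih, mul_add, Finset.mul_sum, Finset.sum_range_succ']
    have hterm : ∀ j : ℕ, jac D * (jac D ^ j * (jac D).map ⇑(rpow D (m - j))) =
        jac D ^ (j + 1) * (jac D).map ⇑(rpow D (m - j)) := fun j => by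
      rw [← mul_assoc, ← pow_succ']
    simp only [hterm, pow_zero, one_mul, Nat.sub_zero, Nat.succ_sub_succ, ← pow_succ']
    abel

/-- `J(D^{[i]}) = Σ_{j=0}^{i-2} J(D)^j · (D^{[i-1-j]}(J(D))) + J(D)^i`
for every `i ≥ 1`. -/
theorem jac_rpow (hn : 1 ≤ n) (D : Der k n) (i : ℕ) (hi : 1 ≤ i) :
    jac (rpow D i) =
      (∑ j ∈ Finset.range (i - 1), (jac D) ^ j * (jac D).map ⇑(rpow D (i - 1 - j))) +
        (jac D) ^ i := by
  obtain ⟨m, rfl⟩ : ∃ m, i = m + 1 := ⟨i - 1, (Nat.succ_pred_eq_of_pos hi).symm⟩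
  simpa using jac_rpow_aux D m
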